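/- Let (Γ, T, n⊥, n, κ_g, τ_g) be a closed asymptotic curve in ℝ³ (with n of class C²). Then ∫₀^{2π} ⟨n″(t), n(t) × n′(t)⟩ / |n′(t)|² dt = ∫₀^{2π} κ_g(t) dt; that is, the total geodesic curvature of the spherical Gauss image n (integrated with respect to the arclength of n) equals the total geodesic curvature ∫_Γ κ_g of Γ. (The change-of-variables identity, equation (11), used in Note 5.2.) -/

import Mathlib

open Real intervalIntegral

noncomputable section

/-- The cross product on `EuclideanSpace ℝ (Fin 3)`. -/
def cross3 (a b : EuclideanSpace ℝ (Fin 3)) : EuclideanSpace ℝ (Fin 3) :=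
  (EuclideanSpace.equiv (Fin 3) ℝ).symm
    (crossProduct ((EuclideanSpace.equiv (Fin 3) ℝ) a) ((EuclideanSpace.equiv (Fin 3) ℝ) b))

lemma cross3_apply (a b : EuclideanSpace ℝ (Fin 3)) (i : Fin 3) :
    cross3 a b i = ![a 1 * b 2 - a 2 * b 1, a 2 * b 0 - a 0 * b 2, a 0 * b 1 - a 1 * b 0] i := by
  simp [cross3, crossProduct]

lemma inner_cross3_right (a b : EuclideanSpace ℝ (Fin 3)) :
    (inner ℝ (cross3 a b) b : ℝ) = 0 := by
  simp [PiLp.inner_apply, Fin.sum_univ_three, cross3_apply]; ring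

lemma inner_cross3_cross3 (a b : EuclideanSpace ℝ (Fin 3)) :
    (inner ℝ (cross3 a b) (cross3 a b) : ℝ)
      = (inner ℝ a a : ℝ) * (inner ℝ b b : ℝ) - (inner ℝ a b : ℝ) ^ 2 := by
  simp [PiLp.inner_apply, Fin.sum_univ_three, cross3_apply, EuclideanSpace.real_norm_sq_eq]; ring

lemma cross3_smul_right (c : ℝ) (a b : EuclideanSpace ℝ (Fin 3)) :
    cross3 a (c • b) = c • cross3 a b := by
  ext i
  fin_cases i <;>
    simp [cross3_apply, PiLp.smul_apply, smul_eq_mul] <;> ring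

lemma cross3_triple (a b : EuclideanSpace ℝ (Fin 3)) :
    cross3 a (cross3 a b) = (inner ℝ a b : ℝ) • a - (inner ℝ a a : ℝ) • b := by
  ext i
  fin_cases i <;>
    simp [cross3_apply, PiLp.inner_apply, Fin.sum_univ_three, PiLp.smul_apply,
      PiLp.sub_apply, smul_eq_mul, EuclideanSpace.real_norm_sq_eq] <;> ring

/-- Equation (11): the total geodesic curvature of the spherical Gauss image `n` equals
the total geodesic curvature `∫ κ_g` of `Γ`. -/
theorem stmt11
    (Γ n : ℝ → EuclideanSpace ℝ (Fin 3)) (κg τg : ℝ → ℝ)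
    (hΓ : ContDiff ℝ 2 Γ) (hΓper : Function.Periodic Γ (2 * π))
    (hT1 : ∀ t, ‖deriv Γ t‖ = 1)
    (hn : ContDiff ℝ 1 n) (hnper : Function.Periodic n (2 * π))
    (hn1 : ∀ t, ‖n t‖ = 1)
    (hnT : ∀ t, (inner ℝ (n t) (deriv Γ t) : ℝ) = 0)
    (hκcont : Continuous κg) (hκper : Function.Periodic κg (2 * π))
    (hτcont : Continuous τg) (hτper : Function.Periodic τg (2 * π))
    (hτ : ∀ t, τg t ≠ 0)
    (hDarboux1 : ∀ t, deriv (deriv Γ) t = κg t • cross3 (n t) (deriv Γ t))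
    (hDarboux2 : ∀ t, deriv (fun s => cross3 (n s) (deriv Γ s)) t
      = -κg t • deriv Γ t + τg t • n t)
    (hDarboux3 : ∀ t, deriv n t = -τg t • cross3 (n t) (deriv Γ t))
    (hn2 : ContDiff ℝ 2 n) :
    ∫ t in (0 : ℝ)..(2 * π),
        (inner ℝ (deriv (deriv n) t) (cross3 (n t) (deriv n t)) : ℝ) / ‖deriv n t‖ ^ 2
      = ∫ t in (0 : ℝ)..(2 * π), κg t := by
  have hΓ2 : ContDiff ℝ 1 (deriv Γ) := (contDiff_succ_iff_deriv.mp hΓ).2.2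
  have hn2' : ContDiff ℝ 1 (deriv n) := (contDiff_succ_iff_deriv.mp hn2).2.2
  have key : ∀ t, (inner ℝ (deriv (deriv n) t) (cross3 (n t) (deriv n t)) : ℝ) / ‖deriv n t‖ ^ 2
      = κg t := by
    intro t
    have hNN : (inner ℝ (n t) (n t) : ℝ) = 1 := by
      rw [real_inner_self_eq_norm_sq, hn1]; norm_num
    have hTT : (inner ℝ (deriv Γ t) (deriv Γ t) : ℝ) = 1 := by
      rw [real_inner_self_eq_norm_sq, hT1]; norm_num
    have hBB : (inner ℝ (cross3 (n t) (deriv Γ t)) (cross3 (n t) (deriv Γ t)) : ℝ) = 1 := by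
      rw [inner_cross3_cross3, hNN, hTT, hnT]; ring
    have hdT : HasDerivAt (deriv Γ) (deriv (deriv Γ) t) t :=
      ((hΓ2.differentiable one_ne_zero) t).hasDerivAt
    have hdN : HasDerivAt (deriv n) (deriv (deriv n) t) t :=
      ((hn2'.differentiable one_ne_zero) t).hasDerivAt
    have hzero : (fun s => (inner ℝ (deriv n s) (deriv Γ s) : ℝ)) = fun _ => (0 : ℝ) := by
      funext s
      rw [hDarboux3 s, real_inner_smul_left, inner_cross3_right]; ring
    have hD := HasDerivAt.inner ℝ hdN hdT
    rw [hzero] at hD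
    have h0 : (inner ℝ (deriv n t) (deriv (deriv Γ) t) : ℝ)
        + (inner ℝ (deriv (deriv n) t) (deriv Γ t) : ℝ) = 0 :=
      hD.unique (hasDerivAt_const t 0)
    have h1 : (inner ℝ (deriv (deriv n) t) (deriv Γ t) : ℝ) = τg t * κg t := by
      have h2 : (inner ℝ (deriv n t) (deriv (deriv Γ) t) : ℝ) = -(τg t * κg t) := by
        rw [hDarboux3 t, hDarboux1 t, real_inner_smul_left, real_inner_smul_right, hBB]; ring
      linarith
    have hc : cross3 (n t) (deriv n t) = τg t • deriv Γ t := by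
      rw [hDarboux3 t, cross3_smul_right, cross3_triple, hnT, hNN]
      module
    have hnorm : ‖deriv n t‖ ^ 2 = τg t ^ 2 := by
      rw [← real_inner_self_eq_norm_sq, hDarboux3 t, real_inner_smul_left,
        real_inner_smul_right, hBB]; ring
    rw [hc, real_inner_smul_right, h1, hnorm]
    have hτt := hτ t
    field_simp
  exact intervalIntegral.integral_congr fun t _ => key t
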